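/- Let m ≥ 3 and let J be the real symmetric m × m matrix with diagonal entries A_0, …, A_{m−1} ∈ ℝ, entries J_{i,i+1} = J_{i+1,i} = B_i for 0 ≤ i ≤ m−2, corner entries J_{0,m−1} = J_{m−1,0} = B_{m−1}, and all other entries zero, where B_i < 0 for every i. If J is positive semidefinite, then the (m−1) × (m−1) matrix J_{m−1} obtained from J by deleting the 0-th row and 0-th column (the tridiagonal matrix with diagonal A_1, …, A_{m−1} and off-diagonal entries B_1, …, B_{m−2}) is positive definite. -/

import Mathlib

open scoped Matrix


/-- Periodic (cyclic) Jacobi matrix with negative couplings: for `m = n + 1 ≥ 3`, let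
`J` have diagonal `A i`, entries `J i (i+1) = J (i+1) i = B i` (indices `0 ≤ i ≤ m-2`),
corner entries `J 0 (m-1) = J (m-1) 0 = B (m-1)`, and zeros elsewhere, with `B i < 0`
for all `i`. If `J` is positive semidefinite, then the matrix obtained by deleting the
`0`-th row and column is positive definite. -/
theorem stmt_5 (n : ℕ) (hn : 2 ≤ n) (A B : Fin (n + 1) → ℝ) (hB : ∀ i, B i < 0)
    (J : Matrix (Fin (n + 1)) (Fin (n + 1)) ℝ)
    (hJ : ∀ i j : Fin (n + 1), J i j =
      if i = j then A i
      else if (i.val + 1) % (n + 1) = j.val then B i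
      else if (j.val + 1) % (n + 1) = i.val then B j
      else 0)
    (hpsd : J.PosSemidef) :
    (J.submatrix Fin.succ Fin.succ).PosDef := by
  classical
  have hsub := hpsd.submatrix (Fin.succ : Fin n → Fin (n + 1))
  refine Matrix.posDef_iff_dotProduct_mulVec.mpr ⟨hsub.1, fun v hv => ?_⟩
  by_contra hle
  push_neg at hle
  -- off-diagonal entries of J are nonpositive
  have hJle : ∀ i j : Fin (n + 1), i ≠ j → J i j ≤ 0 := by
    intro i j hij
    rw [hJ, if_neg hij]
    split_ifs
    · exact (hB _).le
    · exact (hB _).le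
    · exact le_rfl
  -- extend v by zero in position 0
  set x : Fin (n + 1) → ℝ := Fin.cons 0 v with hxdef
  have hx0 : x 0 = 0 := rfl
  have hxsucc : ∀ i : Fin n, x i.succ = v i := fun i => rfl
  have hxq : x ⬝ᵥ J *ᵥ x = v ⬝ᵥ (J.submatrix Fin.succ Fin.succ) *ᵥ v := by
    simp [dotProduct, Matrix.mulVec, Fin.sum_univ_succ, hxdef]
  have hq0 : x ⬝ᵥ J *ᵥ x = 0 := by
    rw [hxq]
    refine le_antisymm ?_ ?_
    · simpa using hle
    · simpa using hsub.dotProduct_mulVec_nonneg v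
  have hker : J *ᵥ x = 0 := (hpsd.dotProduct_mulVec_zero_iff x).mp (by simpa using hq0)
  -- absolute value vector
  set y : Fin (n + 1) → ℝ := fun i => |x i| with hydef
  have hyq : y ⬝ᵥ J *ᵥ y ≤ x ⬝ᵥ J *ᵥ x := by
    simp only [dotProduct, Matrix.mulVec, Finset.mul_sum]
    refine Finset.sum_le_sum fun i _ => Finset.sum_le_sum fun j _ => ?_
    by_cases hij : i = j
    · subst hij
      have habs : y i * y i = x i * x i := by
        simp only [hydef]
        exact abs_mul_abs_self (x i)
      refine le_of_eq ?_
      calc y i * (J i i * y i) = J i i * (y i * y i) := by ring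
        _ = J i i * (x i * x i) := by rw [habs]
        _ = x i * (J i i * x i) := by ring
    · calc y i * (J i j * y j) = J i j * (y i * y j) := by ring
        _ ≤ J i j * (x i * x j) := by
            refine mul_le_mul_of_nonpos_left ?_ (hJle i j hij)
            calc x i * x j ≤ |x i * x j| := le_abs_self _
              _ = y i * y j := abs_mul _ _
        _ = x i * (J i j * x j) := by ring
  have hyq0 : y ⬝ᵥ J *ᵥ y = 0 :=
    le_antisymm (hyq.trans_eq hq0) (by simpa using hpsd.dotProduct_mulVec_nonneg y)
  have hkery : J *ᵥ y = 0 := (hpsd.dotProduct_mulVec_zero_iff y).mp (by simpa using hyq0)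
  -- row 0 of J *ᵥ y = 0 forces y 1 = 0, hence x 1 = 0
  have hrow0 : ∀ j : Fin (n + 1), J 0 j * y j = 0 := by
    have h := congrFun hkery 0
    simp only [Matrix.mulVec, dotProduct, Pi.zero_apply] at h
    intro j
    refine (Finset.sum_eq_zero_iff_of_nonpos ?_).mp h j (Finset.mem_univ j)
    intro j _
    by_cases hj : (0 : Fin (n + 1)) = j
    · rw [← hj]
      have : y 0 = 0 := by simp [hydef, hx0]
      rw [this, mul_zero]
    · exact mul_nonpos_of_nonpos_of_nonneg (hJle _ _ hj) (abs_nonneg _)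
  have h1n : (1 : ℕ) < n + 1 := by omega
  have hx1 : x ⟨1, h1n⟩ = 0 := by
    have h := hrow0 ⟨1, h1n⟩
    have hJ01 : J 0 ⟨1, h1n⟩ = B 0 := by
      rw [hJ]
      rw [if_neg (by simp [Fin.ext_iff]), if_pos (by simp [Nat.mod_eq_of_lt h1n])]
    rw [hJ01] at h
    have := mul_eq_zero.mp h
    rcases this with h' | h'
    · exact absurd h' (ne_of_lt (hB 0))
    · simpa [hydef] using h'
  -- tridiagonal recursion kills all further coordinates
  have key : ∀ k : ℕ, (hk : k < n) →
      x ⟨k, by omega⟩ = 0 ∧ x ⟨k + 1, by omega⟩ = 0 := by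
    intro k
    induction k with
    | zero =>
      intro _
      constructor
      · simpa using hx0
      · simpa using hx1
    | succ k ih =>
      intro hk
      obtain ⟨ih1, ih2⟩ := ih (by omega)
      refine ⟨ih2, ?_⟩
      have hk1 : k + 1 < n + 1 := by omega
      have hk2 : k + 2 < n + 1 := by omega
      have hrow := congrFun hker ⟨k + 1, hk1⟩
      simp only [Matrix.mulVec, dotProduct, Pi.zero_apply] at hrow
      have hsum : ∑ j, J ⟨k + 1, hk1⟩ j * x j
          = J ⟨k + 1, hk1⟩ ⟨k + 2, hk2⟩ * x ⟨k + 2, hk2⟩ := by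
        refine Finset.sum_eq_single_of_mem _ (Finset.mem_univ _) ?_
        intro j _ hjne
        by_cases hjk : j.val = k
        · have : j = ⟨k, by omega⟩ := Fin.ext hjk
          rw [this, ih1, mul_zero]
        · by_cases hjk1 : j.val = k + 1
          · have : j = ⟨k + 1, by omega⟩ := Fin.ext hjk1
            rw [this, ih2, mul_zero]
          · have hjk2 : j.val ≠ k + 2 := fun h => hjne (Fin.ext h)
            have hz : J ⟨k + 1, hk1⟩ j = 0 := by
              rw [hJ]
              rw [if_neg (by intro h; subst h; exact hjk1 rfl)]
              rw [if_neg (show ¬((k + 2) % (n + 1) = j.val) from by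
                rw [Nat.mod_eq_of_lt hk2]; omega)]
              rw [if_neg (show ¬((j.val + 1) % (n + 1) = k + 1) from by
                by_cases hj : j.val = n
                · rw [hj]
                  simp [Nat.mod_self]
                · have : j.val + 1 < n + 1 := by omega
                  rw [Nat.mod_eq_of_lt this]
                  omega)]
            rw [hz, zero_mul]
      rw [hsum] at hrow
      have hJk : J ⟨k + 1, hk1⟩ ⟨k + 2, hk2⟩ = B ⟨k + 1, hk1⟩ := by
        rw [hJ]
        rw [if_neg (show ¬((⟨k + 1, hk1⟩ : Fin (n+1)) = ⟨k + 2, hk2⟩) from by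
          simp [Fin.ext_iff])]
        rw [if_pos (show (k + 2) % (n + 1) = (k + 2 : ℕ) from Nat.mod_eq_of_lt hk2)]
      rw [hJk] at hrow
      rcases mul_eq_zero.mp hrow with h' | h'
      · exact absurd h' (ne_of_lt (hB _))
      · exact h'
  apply hv
  funext i
  have hi : i.val < n := i.isLt
  have := (key i.val hi).2
  have hsucc : (Fin.succ i : Fin (n + 1)) = ⟨i.val + 1, by omega⟩ := rfl
  rw [← hxsucc i, hsucc, this]
  rfl
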